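/- arXiv:0710.1482 — 5 statements merged into one kernel-verified Lean document; each statement's English description precedes it below -/
import Mathlib

section
/- Single-iteration ε-bypass lemma (Lemma: no new information): let N : NFA Σ σ and let E ⊆ σ × σ be a set of pairs such that for every (q', q'') ∈ E there exist a state q and an unbarred letter a ∈ {𝟎, 𝟏} with q ∈ N.step q' (bar a) and q'' ∈ N.step q a. Let M : εNFA Σ σ agree with N on all letter transitions (M.step s (some a) = N.step s a), have ε-transitions M.step s none = { t | (s,t) ∈ E }, and have the same start and accept sets as N. Then for every word α accepted by M there exists a word α' accepted by N with Red* α' α. -/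
/-- The four-letter alphabet Σ = {𝟎, 𝟏, 𝟎̄, 𝟏̄}. -/
inductive Sig : Type where
  | c0 : Sig  -- 𝟎
  | c1 : Sig  -- 𝟏
  | b0 : Sig  -- 𝟎̄
  | b1 : Sig  -- 𝟏̄
  deriving DecidableEq

open Sig

/-- A letter is unbarred if it is 𝟎 or 𝟏. -/
def Unbarred : Sig → Prop
  | c0 => True
  | c1 => True
  | b0 => False
  | b1 => False

/-- A letter is barred if it is 𝟎̄ or 𝟏̄. -/
def Barred : Sig → Prop
  | c0 => False
  | c1 => False
  | b0 => True
  | b1 => True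

/-- One-step reduction: delete an adjacent factor 𝟎̄𝟎 or 𝟏̄𝟏. -/
def Red (w w' : List Sig) : Prop :=
  ∃ u v : List Sig, (w = u ++ [b0, c0] ++ v ∨ w = u ++ [b1, c1] ++ v) ∧ w' = u ++ v

/-- Barring an unbarred letter: bar(𝟎)=𝟎̄, bar(𝟏)=𝟏̄ (identity on barred letters). -/
def bar : Sig → Sig
  | c0 => b0
  | c1 => b1
  | b0 => b0
  | b1 => b1


theorem red_append {w w' : List Sig} (x y : List Sig) (h : Red w w') :
    Red (x ++ w ++ y) (x ++ w' ++ y) := by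
  obtain ⟨u, v, huv, hw'⟩ := h
  refine ⟨x ++ u, v ++ y, ?_, by simp [hw']⟩
  rcases huv with h | h
  · left; simp [h]
  · right; simp [h]

theorem redStar_append {w w' : List Sig} (x y : List Sig)
    (h : Relation.ReflTransGen Red w w') :
    Relation.ReflTransGen Red (x ++ w ++ y) (x ++ w' ++ y) := by
  induction h with
  | refl => exact .refl
  | tail _ hstep ih => exact ih.tail (red_append x y hstep)

theorem nfa_stepSet_mono {σ : Type*} (N : NFA Sig σ) {S T : Set σ} (h : S ⊆ T) (a : Sig) :
    N.stepSet S a ⊆ N.stepSet T a := by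
  intro t ht
  rw [NFA.mem_stepSet] at ht ⊢
  obtain ⟨s, hs, hst⟩ := ht
  exact ⟨s, h hs, hst⟩

theorem nfa_evalFrom_mono {σ : Type*} (N : NFA Sig σ) {S T : Set σ} (h : S ⊆ T)
    (w : List Sig) : N.evalFrom S w ⊆ N.evalFrom T w := by
  induction w generalizing S T with
  | nil => exact h
  | cons a w ih => exact ih (nfa_stepSet_mono N h a)

theorem closure_key {σ : Type*} (N : NFA Sig σ) (E : Set (σ × σ))
    (hE : ∀ p ∈ E, ∃ (q : σ) (a : Sig), a ∈ ({c0, c1} : Set Sig) ∧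
      q ∈ N.step p.1 (bar a) ∧ p.2 ∈ N.step q a)
    (M : εNFA Sig σ)
    (heps : ∀ s, M.step s none = { t | (s, t) ∈ E })
    {S : Set σ} {t : σ} (ht : t ∈ M.εClosure S) :
    ∃ s ∈ S, ∃ w, t ∈ N.evalFrom {s} w ∧ Relation.ReflTransGen Red w [] := by
  induction ht with
  | base s hs => exact ⟨s, hs, [], rfl, .refl⟩
  | @step s u hu _ ih =>
    obtain ⟨s₀, hs₀, w, hw, hred⟩ := ih
    rw [heps] at hu
    obtain ⟨q, a, ha, hq1, hq2⟩ := hE _ hu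
    refine ⟨s₀, hs₀, w ++ [bar a, a], ?_, ?_⟩
    · have : u ∈ N.evalFrom {s} [bar a, a] := by
        simp only [NFA.evalFrom, List.foldl_cons, List.foldl_nil]
        rw [NFA.mem_stepSet]
        exact ⟨q, by rw [NFA.mem_stepSet]; exact ⟨s, rfl, hq1⟩, hq2⟩
      have h2 : N.evalFrom {s} [bar a, a] ⊆ N.evalFrom (N.evalFrom {s₀} w) [bar a, a] :=
        nfa_evalFrom_mono N (Set.singleton_subset_iff.mpr hw) _
      have := h2 this
      rwa [NFA.evalFrom, NFA.evalFrom, ← List.foldl_append] at this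
    · exact Relation.ReflTransGen.head (b := w)
        ⟨w, [], by rcases ha with h|h <;> subst h <;> simp [bar], by simp⟩ hred

theorem main_key {σ : Type*} (N : NFA Sig σ) (E : Set (σ × σ))
    (hE : ∀ p ∈ E, ∃ (q : σ) (a : Sig), a ∈ ({c0, c1} : Set Sig) ∧
      q ∈ N.step p.1 (bar a) ∧ p.2 ∈ N.step q a)
    (M : εNFA Sig σ)
    (hstep : ∀ s a, M.step s (some a) = N.step s a)
    (heps : ∀ s, M.step s none = { t | (s, t) ∈ E })
    (hstart : M.start = N.start) :
    ∀ (α : List Sig) (t : σ), t ∈ M.eval α →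
      ∃ α', t ∈ N.eval α' ∧ Relation.ReflTransGen Red α' α := by
  intro α
  induction α using List.reverseRecOn with
  | nil =>
    intro t ht
    rw [εNFA.eval_nil, hstart] at ht
    obtain ⟨s, hs, w, hw, hred⟩ := closure_key N E hE M heps ht
    refine ⟨w, ?_, by simpa using hred⟩
    exact nfa_evalFrom_mono N (Set.singleton_subset_iff.mpr hs) w hw
  | append_singleton α a ih =>
    intro t ht
    rw [εNFA.eval_append_singleton, εNFA.mem_stepSet_iff] at ht
    obtain ⟨s, hs, hcl⟩ := ht
    obtain ⟨α', hα', hred⟩ := ih s hs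
    rw [hstep] at hcl
    obtain ⟨s', hs', w, hw, hredw⟩ := closure_key N E hE M heps hcl
    refine ⟨α' ++ a :: w, ?_, ?_⟩
    · have hs'2 : s' ∈ N.eval (α' ++ [a]) := by
        rw [NFA.eval_append_singleton, NFA.mem_stepSet]
        exact ⟨s, hα', hs'⟩
      have := nfa_evalFrom_mono N (Set.singleton_subset_iff.mpr hs'2) w hw
      simp only [NFA.eval, NFA.evalFrom] at this ⊢
      simpa [List.foldl_append] using this
    · calc α' ++ a :: w = α' ++ [a] ++ w ++ [] := by simp
        _ = (α' ++ [a]) ++ w ++ [] := by simp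
      refine Relation.ReflTransGen.trans
        (redStar_append (α' ++ [a]) [] hredw) ?_
      simpa using redStar_append [] [a] hred


/-- Single-iteration ε-bypass lemma (no new information): any word accepted after
adding the bypass ε-edges is a reduced version of a word accepted before. -/
theorem stmt4 {σ : Type*} (N : NFA Sig σ) (E : Set (σ × σ))
    (hE : ∀ p ∈ E, ∃ (q : σ) (a : Sig), a ∈ ({c0, c1} : Set Sig) ∧
      q ∈ N.step p.1 (bar a) ∧ p.2 ∈ N.step q a)
    (M : εNFA Sig σ)
    (hstep : ∀ s a, M.step s (some a) = N.step s a)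
    (heps : ∀ s, M.step s none = { t | (s, t) ∈ E })
    (hstart : M.start = N.start) (haccept : M.accept = N.accept) :
    ∀ α ∈ M.accepts, ∃ α' ∈ N.accepts, Relation.ReflTransGen Red α' α := by
  intro α hα
  obtain ⟨t, ht, heval⟩ := hα
  rw [haccept] at ht
  obtain ⟨α', hα', hred⟩ := main_key N E hE M hstep heps hstart α t heval
  exact ⟨α', ⟨t, ht, hα'⟩, hred⟩
end

section
/- Closure lemma: let N : NFA Σ σ be an automaton whose language is a fixed point of bypass saturation, i.e., the language accepted by sat N equals the language accepted by N. Then the language of N is closed under reduction: if α is accepted by N and Red* α α', then α' is accepted by N. -/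
open Sig

/-- Bypass saturation: add an ε-edge bypassing every pair of consecutive edges
labeled 𝟎̄𝟎 or 𝟏̄𝟏; keep all letter transitions, start and accept sets. -/
def sat {σ : Type*} (N : NFA Sig σ) : εNFA Sig σ where
  step s := fun o => match o with
    | some a => N.step s a
    | none => { q'' | ∃ q, ∃ a ∈ ({c0, c1} : Set Sig), q ∈ N.step s (bar a) ∧ q'' ∈ N.step q a }
  start := N.start
  accept := N.accept

section Aux

variable {σ : Type*}

open Sig

/-- Simulation: an NFA run from `S` is matched by the saturated εNFA continuation from any
superset `T`. -/
lemma nfa_evalFrom_subset_foldl (N : NFA Sig σ) :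
    ∀ (v : List Sig) (S T : Set σ), S ⊆ T →
      N.evalFrom S v ⊆ List.foldl (sat N).stepSet T v := by
  intro v
  induction v with
  | nil => intro S T hST; simpa [NFA.evalFrom] using hST
  | cons a v ih =>
    intro S T hST
    have hstep : N.stepSet S a ⊆ (sat N).stepSet T a := by
      intro q hq
      rw [NFA.mem_stepSet] at hq
      obtain ⟨s, hsS, hq⟩ := hq
      exact εNFA.mem_stepSet_iff.mpr ⟨s, hST hsS, εNFA.εClosure.base _ hq⟩
    simpa [NFA.evalFrom, List.foldl_cons] using ih (N.stepSet S a) ((sat N).stepSet T a) hstep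

/-- `stepSet` of an εNFA is closed under ε-transitions. -/
lemma stepSet_εClosed (M : εNFA Sig σ) (S : Set σ) (a : Sig) :
    ∀ s ∈ M.stepSet S a, ∀ t ∈ M.step s none, t ∈ M.stepSet S a := by
  intro s hs t ht
  rw [εNFA.mem_stepSet_iff] at hs ⊢
  obtain ⟨q, hq, hs⟩ := hs
  exact ⟨q, hq, εNFA.εClosure.step s t ht hs⟩

/-- `evalFrom` of an εNFA is closed under ε-transitions. -/
lemma evalFrom_εClosed (M : εNFA Sig σ) :
    ∀ (w : List Sig) (S : Set σ), ∀ s ∈ M.evalFrom S w, ∀ t ∈ M.step s none,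
      t ∈ M.evalFrom S w := by
  have key : ∀ (w : List Sig) (X : Set σ),
      (∀ s ∈ X, ∀ t ∈ M.step s none, t ∈ X) →
      ∀ s ∈ List.foldl M.stepSet X w, ∀ t ∈ M.step s none, t ∈ List.foldl M.stepSet X w := by
    intro w
    induction w with
    | nil => intro X hX; simpa using hX
    | cons a w ih =>
      intro X _hX
      simpa [List.foldl_cons] using ih (M.stepSet X a) (stepSet_εClosed M X a)
  intro w S
  exact key w (M.εClosure S) (fun s hs t ht => εNFA.εClosure.step s t ht hs)

/-- Single bypass step: deleting a factor `bar a, a` keeps the word in the saturated language. -/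
lemma sat_accepts_of_factor (N : NFA Sig σ) (u v : List Sig) (a : Sig)
    (ha : a ∈ ({c0, c1} : Set Sig))
    (hacc : u ++ [bar a, a] ++ v ∈ N.accepts) :
    u ++ v ∈ (sat N).accepts := by
  rw [NFA.mem_accepts] at hacc
  obtain ⟨f, hf, hfe⟩ := hacc
  set T : Set σ := (sat N).evalFrom (sat N).start u with hT
  have hfe' : f ∈ N.evalFrom (N.stepSet (N.stepSet (N.evalFrom N.start u) (bar a)) a) v := by
    have : N.evalFrom N.start (u ++ [bar a, a] ++ v)
        = N.evalFrom (N.stepSet (N.stepSet (N.evalFrom N.start u) (bar a)) a) v := by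
      simp [NFA.evalFrom, List.foldl_append]
    rwa [this] at hfe
  -- the set after reading u ++ [bar a, a] in N is inside T
  have hsub : N.stepSet (N.stepSet (N.evalFrom N.start u) (bar a)) a ⊆ T := by
    intro q' hq'
    rw [NFA.mem_stepSet] at hq'
    obtain ⟨q, hq, hq'⟩ := hq'
    rw [NFA.mem_stepSet] at hq
    obtain ⟨s, hs, hq⟩ := hq
    have hsT : s ∈ T := by
      have := nfa_evalFrom_subset_foldl N u N.start ((sat N).εClosure N.start)
        (εNFA.subset_εClosure _ _) hs
      rw [hT]; exact this
    have hε : q' ∈ (sat N).step s none := ⟨q, a, ha, hq, hq'⟩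
    exact evalFrom_εClosed (sat N) u (sat N).start s hsT q' hε
  have hmain := nfa_evalFrom_subset_foldl N v _ T hsub hfe'
  refine ⟨f, hf, ?_⟩
  show f ∈ (sat N).evalFrom (sat N).start (u ++ v)
  rw [εNFA.evalFrom, List.foldl_append]
  exact hmain

/-- Single reduction step preserves acceptance. -/
lemma accepts_of_red (N : NFA Sig σ) (h : (sat N).accepts = N.accepts)
    {β β' : List Sig} (hred : Red β β') (hβ : β ∈ N.accepts) : β' ∈ N.accepts := by
  obtain ⟨u, v, hcases, rfl⟩ := hred
  rw [← h]
  rcases hcases with rfl | rfl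
  · exact sat_accepts_of_factor N u v c0 (by simp) hβ
  · exact sat_accepts_of_factor N u v c1 (by simp) hβ

end Aux

/-- Closure lemma: if the language of N is a fixed point of bypass saturation,
then it is closed under reduction. -/
theorem stmt6 {σ : Type*} (N : NFA Sig σ)
    (h : (sat N).accepts = N.accepts) :
    ∀ α ∈ N.accepts, ∀ α', Relation.ReflTransGen Red α α' → α' ∈ N.accepts := by
  intro α hα α' hred
  induction hred with
  | refl => exact hα
  | tail _ hstep ih => exact accepts_of_red N h hstep ih
end

section
/- Closure corollary: let N : NFA Σ σ satisfy that the language accepted by sat N equals the language accepted by N, and let L₀ be any language over Σ with L₀ contained in the language of N. Then for every α ∈ L₀ with Red* α α', the word α' is accepted by N. -/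
open Sig

lemma eval_mono {σ : Type*} (N : NFA Sig σ) :
    ∀ (w : List Sig) (S T : Set σ), S ⊆ T →
      N.evalFrom S w ⊆ List.foldl (sat N).stepSet T w := by
  intro w
  induction w with
  | nil => intro S T hST; simpa using hST
  | cons a w ih =>
    intro S T hST
    show N.evalFrom (N.stepSet S a) w ⊆ List.foldl (sat N).stepSet ((sat N).stepSet T a) w
    apply ih
    intro q hq
    rw [NFA.mem_stepSet] at hq
    obtain ⟨t, ht, hq⟩ := hq
    rw [εNFA.mem_stepSet_iff]
    exact ⟨t, hST ht, εNFA.εClosure.base _ hq⟩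

lemma foldl_closed {σ : Type*} (N : NFA Sig σ) (S : Set σ) :
    ∀ (u : List Sig),
      (sat N).εClosure (List.foldl (sat N).stepSet ((sat N).εClosure S) u)
        ⊆ List.foldl (sat N).stepSet ((sat N).εClosure S) u := by
  have cl : ∀ (T : Set σ), (sat N).εClosure ((sat N).εClosure T) ⊆ (sat N).εClosure T := by
    intro T q hq
    induction hq with
    | base s hs => exact hs
    | step s t ht _ ih => exact εNFA.εClosure.step s t ht ih
  have clstep : ∀ (T : Set σ) (a : Sig),
      (sat N).εClosure ((sat N).stepSet T a) ⊆ (sat N).stepSet T a := by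
    intro T a q hq
    induction hq with
    | base s hs => exact hs
    | step s t ht _ ih =>
      rw [εNFA.mem_stepSet_iff] at ih ⊢
      obtain ⟨u, hu, hs⟩ := ih
      exact ⟨u, hu, εNFA.εClosure.step s t ht hs⟩
  intro u
  induction u using List.reverseRecOn with
  | nil => simpa using cl S
  | append_singleton u a ih =>
    rw [List.foldl_append, List.foldl_cons, List.foldl_nil]
    exact clstep _ a

lemma red_step {σ : Type*} (N : NFA Sig σ)
    (h : (sat N).accepts = N.accepts) :
    ∀ α α', Red α α' → α ∈ N.accepts → α' ∈ N.accepts := by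
  rintro α α' ⟨u, v, hw, rfl⟩ hacc
  -- extract the letter a
  obtain ⟨a, ha, rfl⟩ : ∃ a ∈ ({c0, c1} : Set Sig), α = u ++ [bar a, a] ++ v := by
    rcases hw with hw | hw
    · exact ⟨c0, Or.inl rfl, hw⟩
    · exact ⟨c1, Or.inr rfl, hw⟩
  rw [← h]
  obtain ⟨q, hq, hev⟩ := hacc
  -- hev : q ∈ N.eval (u ++ [bar a, a] ++ v)
  refine ⟨q, hq, ?_⟩
  -- (sat N).eval (u ++ v)
  show q ∈ List.foldl (sat N).stepSet ((sat N).εClosure N.start) (u ++ v)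
  rw [List.foldl_append]
  set Tu := List.foldl (sat N).stepSet ((sat N).εClosure N.start) u with hTu
  have hsub : N.eval (u ++ [bar a, a] ++ v)
      ⊆ List.foldl (sat N).stepSet Tu v := by
    have h1 : N.evalFrom N.start u ⊆ Tu :=
      eval_mono N u N.start _ ((sat N).subset_εClosure N.start)
    have h2 : N.evalFrom (N.evalFrom N.start u) [bar a, a] ⊆ Tu := by
      intro q2 hq2
      simp only [NFA.evalFrom, List.foldl_cons, List.foldl_nil] at hq2
      rw [NFA.mem_stepSet] at hq2
      obtain ⟨q1, hq1, hq2⟩ := hq2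
      rw [NFA.mem_stepSet] at hq1
      obtain ⟨s, hs, hq1⟩ := hq1
      apply foldl_closed N N.start u
      refine εNFA.εClosure.step s q2 ?_ (εNFA.εClosure.base _ (h1 hs))
      exact ⟨q1, a, ha, hq1, hq2⟩
    have h3 : N.evalFrom (N.evalFrom (N.evalFrom N.start u) [bar a, a]) v
        ⊆ List.foldl (sat N).stepSet Tu v :=
      eval_mono N v _ _ h2
    intro x hx
    apply h3
    simp only [NFA.eval, NFA.evalFrom, List.foldl_append] at hx ⊢
    exact hx
  exact hsub hev

/-- Closure corollary: reducts of words of a sublanguage L₀ of the fixed-point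
automaton's language are accepted by the fixed-point automaton. -/
theorem stmt7 {σ : Type*} (N : NFA Sig σ)
    (h : (sat N).accepts = N.accepts)
    (L₀ : Language Sig) (hL : L₀ ≤ N.accepts) :
    ∀ α ∈ L₀, ∀ α', Relation.ReflTransGen Red α α' → α' ∈ N.accepts := by
  intro α hα α' hred
  induction hred with
  | refl => exact hL hα
  | tail _ hstep ih => exact red_step N h _ _ hstep ih
end

section
/- Equivalence theorem, part 1: let N_m : NFA Σ σ satisfy that the language accepted by sat N_m equals the language accepted by N_m, and let L₀ be a language over Σ with L₀ contained in the language of N_m. Let N = N_m↾ be the restriction of N_m to unbarred transitions. If α ∈ L₀, Red* α β, and every letter of β is unbarred (β is a canonical forward path, not ⊥), then β is accepted by N. -/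
open Sig

/-- Restriction of an NFA to unbarred transitions: delete all edges labeled 𝟎̄ or 𝟏̄. -/
def restrict {σ : Type*} (N : NFA Sig σ) : NFA Sig σ where
  step s := fun a => match a with
    | c0 => N.step s c0
    | c1 => N.step s c1
    | b0 => ∅
    | b1 => ∅
  start := N.start
  accept := N.accept

section Aux

variable {σ : Type*}

open εNFA

/-- foldl stepSet is monotone (NFA). -/
lemma nfa_foldl_mono (N : NFA Sig σ) : ∀ (v : List Sig) {S T : Set σ}, S ⊆ T →
    List.foldl N.stepSet S v ⊆ List.foldl N.stepSet T v := by
  intro v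
  induction v with
  | nil => intro S T h; exact h
  | cons a v ih =>
    intro S T h
    apply ih
    intro x hx
    rw [NFA.mem_stepSet] at hx ⊢
    obtain ⟨t, ht, hx⟩ := hx
    exact ⟨t, h ht, hx⟩

/-- foldl stepSet is monotone (εNFA). -/
lemma enfa_foldl_mono (M : εNFA Sig σ) : ∀ (v : List Sig) {S T : Set σ}, S ⊆ T →
    List.foldl M.stepSet S v ⊆ List.foldl M.stepSet T v := by
  intro v
  induction v with
  | nil => intro S T h; exact h
  | cons a v ih =>
    intro S T h
    apply ih
    intro x hx
    rw [εNFA.mem_stepSet_iff] at hx ⊢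
    obtain ⟨t, ht, hx⟩ := hx
    exact ⟨t, h ht, hx⟩

/-- NFA evaluation is below εNFA foldl evaluation for `sat`. -/
lemma nfa_le_sat (N : NFA Sig σ) : ∀ (v : List Sig) (S : Set σ),
    N.evalFrom S v ⊆ List.foldl (sat N).stepSet S v := by
  intro v
  induction v with
  | nil => intro S; exact fun x hx => hx
  | cons a v ih =>
    intro S
    refine subset_trans (ih _) (enfa_foldl_mono _ v ?_)
    intro x hx
    rw [NFA.mem_stepSet] at hx
    obtain ⟨t, ht, hx⟩ := hx
    rw [εNFA.mem_stepSet_iff]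
    exact ⟨t, ht, εNFA.εClosure.base _ hx⟩

lemma εClosure_εClosure (M : εNFA Sig σ) (S : Set σ) :
    M.εClosure (M.εClosure S) = M.εClosure S := by
  apply Set.Subset.antisymm
  · intro x hx
    induction hx with
    | base s hs => exact hs
    | step s t ht _ ih => exact εNFA.εClosure.step s t ht ih
  · exact M.subset_εClosure _

lemma εClosure_stepSet (M : εNFA Sig σ) (S : Set σ) (a : Sig) :
    M.εClosure (M.stepSet S a) = M.stepSet S a := by
  apply Set.Subset.antisymm
  · intro x hx
    induction hx with
    | base s hs => exact hs
    | step s t ht _ ih =>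
      rw [εNFA.mem_stepSet_iff] at ih ⊢
      obtain ⟨p, hp, hs⟩ := ih
      exact ⟨p, hp, εNFA.εClosure.step s t ht hs⟩
  · exact M.subset_εClosure _

lemma εClosure_evalFrom (M : εNFA Sig σ) (S : Set σ) (u : List Sig) :
    M.εClosure (M.evalFrom S u) = M.evalFrom S u := by
  induction u using List.reverseRecOn with
  | nil => simpa using εClosure_εClosure M S
  | append_singleton u a _ => rw [εNFA.evalFrom_append_singleton, εClosure_stepSet]

/-- decomposition of NFA evaluation. -/
lemma nfa_evalFrom_decomp (N : NFA Sig σ) : ∀ (v : List Sig) (S : Set σ) (f : σ),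
    f ∈ N.evalFrom S v → ∃ q ∈ S, f ∈ N.evalFrom {q} v := by
  intro v
  induction v with
  | nil => intro S f hf; exact ⟨f, hf, rfl⟩
  | cons a v ih =>
    intro S f hf
    obtain ⟨q'', hq'', hf⟩ := ih (N.stepSet S a) f hf
    rw [NFA.mem_stepSet] at hq''
    obtain ⟨q, hq, hq''⟩ := hq''
    refine ⟨q, hq, ?_⟩
    have : ({q''} : Set σ) ⊆ N.stepSet {q} a := by
      intro x hx; rw [Set.mem_singleton_iff] at hx; subst hx
      rw [NFA.mem_stepSet]; exact ⟨q, rfl, hq''⟩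
    exact nfa_foldl_mono N v this hf

/-- One step of reduction preserves acceptance. -/
lemma red_accept (N : NFA Sig σ) (h : (sat N).accepts = N.accepts) {w w' : List Sig}
    (hr : Red w w') (hw : w ∈ N.accepts) : w' ∈ N.accepts := by
  obtain ⟨u, v, hcase, rfl⟩ := hr
  rw [← h]
  have key : ∀ a ∈ ({c0, c1} : Set Sig), w = u ++ [bar a, a] ++ v →
      (u ++ v) ∈ (sat N).accepts := by
    intro a ha hw'
    obtain ⟨f, hf, hfe⟩ := hw
    rw [NFA.eval, hw'] at hfe
    have heq : N.evalFrom N.start (u ++ [bar a, a] ++ v)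
        = N.evalFrom (N.stepSet (N.stepSet (N.evalFrom N.start u) (bar a)) a) v := by
      simp [NFA.evalFrom, List.foldl_append]
    rw [heq] at hfe
    obtain ⟨q'', hq'', hf2⟩ := nfa_evalFrom_decomp N v _ f hfe
    rw [NFA.mem_stepSet] at hq''
    obtain ⟨q, hq, hq''⟩ := hq''
    rw [NFA.mem_stepSet] at hq
    obtain ⟨s, hs, hq⟩ := hq
    -- s is reachable in sat N after u
    have hsE : s ∈ (sat N).evalFrom N.start u := by
      have h1 := nfa_le_sat N u N.start hs
      have h2 : List.foldl (sat N).stepSet N.start u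
          ⊆ List.foldl (sat N).stepSet ((sat N).εClosure N.start) u :=
        enfa_foldl_mono _ u ((sat N).subset_εClosure _)
      exact h2 h1
    -- q'' reachable by ε-step
    have hq''E : q'' ∈ (sat N).evalFrom N.start u := by
      rw [← εClosure_evalFrom]
      refine εNFA.εClosure.step s q'' ?_ (εNFA.εClosure.base _ hsE)
      exact ⟨q, a, ha, hq, hq''⟩
    refine ⟨f, hf, ?_⟩
    show f ∈ (sat N).evalFrom N.start (u ++ v)
    have : (sat N).evalFrom N.start (u ++ v)
        = List.foldl (sat N).stepSet ((sat N).evalFrom N.start u) v := by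
      simp [εNFA.evalFrom, List.foldl_append]
    rw [this]
    have h1 : f ∈ List.foldl (sat N).stepSet {q''} v := nfa_le_sat N v {q''} hf2
    refine enfa_foldl_mono _ v ?_ h1
    intro x hx; rw [Set.mem_singleton_iff] at hx; subst hx; exact hq''E
  rcases hcase with hc | hc
  · exact key c0 (Or.inl rfl) hc
  · exact key c1 (Or.inr rfl) hc

/-- Unbarred words accepted by N are accepted by restrict N. -/
lemma unbarred_restrict (N : NFA Sig σ) : ∀ (β : List Sig) (S : Set σ),
    (∀ a ∈ β, Unbarred a) → (restrict N).evalFrom S β = N.evalFrom S β := by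
  intro β
  induction β with
  | nil => intro S _; rfl
  | cons a β ih =>
    intro S hu
    have hstep : (restrict N).stepSet S a = N.stepSet S a := by
      have ha := hu a List.mem_cons_self
      cases a <;> simp [Unbarred] at ha <;> rfl
    show (restrict N).evalFrom ((restrict N).stepSet S a) β = _
    rw [hstep]
    exact ih _ (fun x hx => hu x (List.mem_cons_of_mem a hx))

end Aux

/-- Equivalence theorem, part 1: every canonical forward path (all letters unbarred)
obtained by reducing a word of L₀ is accepted by the restricted automaton. -/
theorem stmt8 {σ : Type*} (Nm : NFA Sig σ)
    (h : (sat Nm).accepts = Nm.accepts)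
    (L₀ : Language Sig) (hL : L₀ ≤ Nm.accepts) :
    ∀ α ∈ L₀, ∀ β, Relation.ReflTransGen Red α β → (∀ a ∈ β, Unbarred a) →
      β ∈ (restrict Nm).accepts := by
  intro α hα β hred hub
  have hβ : β ∈ Nm.accepts := by
    clear hub
    induction hred with
    | refl => exact hL hα
    | tail _ hr ih => exact red_accept Nm h hr ih
  obtain ⟨f, hf, hfe⟩ := hβ
  refine ⟨f, hf, ?_⟩
  show f ∈ (restrict Nm).evalFrom (restrict Nm).start β
  rw [show (restrict Nm).start = Nm.start from rfl, unbarred_restrict Nm β Nm.start hub]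
  exact hfe
end

section
/- Equivalence theorem, part 2: let N_m : NFA Σ σ and let L₀ be a language over Σ such that every word α accepted by N_m has a word α' ∈ L₀ with Red* α' α. Let N = N_m↾ be the restriction of N_m to unbarred transitions. Then for every word β accepted by N there exists α ∈ L₀ with Red* α β. -/
open Sig

lemma restrict_step_sub {σ : Type*} (N : NFA Sig σ) (s : σ) (a : Sig) :
    (restrict N).step s a ⊆ N.step s a := by
  cases a <;> simp [restrict]

lemma restrict_eval_sub {σ : Type*} (N : NFA Sig σ) (w : List Sig) :
    ∀ S S' : Set σ, S ⊆ S' → (restrict N).evalFrom S w ⊆ N.evalFrom S' w := by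
  induction w with
  | nil => intro S S' h; simpa [NFA.evalFrom] using h
  | cons a w ih =>
    intro S S' h
    simp only [NFA.evalFrom, List.foldl_cons] at *
    apply ih
    intro x hx
    rw [NFA.mem_stepSet] at hx ⊢
    rcases hx with ⟨s, hs, hx⟩
    exact ⟨s, h hs, restrict_step_sub N s a hx⟩

/-- Equivalence theorem, part 2: every word accepted by the restricted automaton
is a reduced version of some word of L₀. -/
theorem stmt9 {σ : Type*} (Nm : NFA Sig σ) (L₀ : Language Sig)
    (h : ∀ α ∈ Nm.accepts, ∃ α' ∈ L₀, Relation.ReflTransGen Red α' α) :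
    ∀ β ∈ (restrict Nm).accepts, ∃ α ∈ L₀, Relation.ReflTransGen Red α β := by
  intro β hβ
  apply h
  rcases hβ with ⟨s, hs, hev⟩
  exact ⟨s, hs, restrict_eval_sub Nm β _ _ (by rfl) hev⟩
end
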